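/- Let (I, e, N, ᾱ, d) be a fusion algebra datum. Then for all finitely supported f, ξ : I → ℂ one has ‖f · ξ‖₂ ≤ (∑_α |f(α)|·d(α)²)·‖ξ‖₂, where (f · ξ)(γ) := ∑_{α,β} f(α)·ξ(β)·N_{α,β}^γ (a finite sum) and ‖ξ‖₂ := (∑_γ |ξ(γ)|²·d(γ)²)^{1/2}. -/

import Mathlib

/-- A fusion algebra datum on an index set `I`: a unit `e`, structure constants
`N`, a conjugation `bar`, and a dimension function `d`, satisfying finiteness
of fusion, the unit rules, Frobenius reciprocity and multiplicativity of `d`. -/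
structure FusionData (I : Type*) where
  e : I
  N : I → I → I → ℕ
  bar : I → I
  d : I → ℝ
  N_fin : ∀ α β, (Function.support (N α β)).Finite
  bar_bar : ∀ α, bar (bar α) = α
  bar_e : bar e = e
  one_le_d : ∀ α, 1 ≤ d α
  d_bar : ∀ α, d (bar α) = d α
  N_unit_right : ∀ α, N α e α = 1
  N_unit_right' : ∀ α γ, γ ≠ α → N α e γ = 0
  N_unit_left : ∀ α, N e α α = 1
  N_unit_left' : ∀ α γ, γ ≠ α → N e α γ = 0
  frob₁ : ∀ α β γ, N α β γ = N (bar α) γ β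
  frob₂ : ∀ α β γ, N α β γ = N γ (bar β) α
  d_mul : ∀ α β, d α * d β = ∑ᶠ γ, (N α β γ : ℝ) * d γ

/-- A length function on a fusion algebra datum. -/
structure IsLength {I : Type*} (F : FusionData I) (ℓ : I → ℝ) : Prop where
  nonneg : ∀ α, 0 ≤ ℓ α
  map_e : ℓ F.e = 0
  map_bar : ∀ α, ℓ (F.bar α) = ℓ α
  subadd : ∀ α β γ, F.N α β γ ≠ 0 → ℓ γ ≤ ℓ α + ℓ β

/-- A length function is proper if balls are finite and only `e` has length 0. -/
def IsProperLength {I : Type*} (F : FusionData I) (ℓ : I → ℝ) : Prop :=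
  (∀ R : ℝ, 0 ≤ R → {α : I | ℓ α ≤ R}.Finite) ∧ ∀ α, ℓ α = 0 → α = F.e

/-- The fusion product `(f · ξ)(γ) = ∑_{α,β} f(α) ξ(β) N_{α,β}^γ`. -/
noncomputable def fmul {I : Type*} (F : FusionData I) (f ξ : I → ℂ) : I → ℂ :=
  fun γ => ∑ᶠ α, ∑ᶠ β, f α * ξ β * (F.N α β γ : ℂ)

/-- The weighted `ℓ²`-norm `‖ξ‖₂ = (∑_γ |ξ(γ)|² d(γ)²)^{1/2}`. -/
noncomputable def norm2 {I : Type*} (F : FusionData I) (ξ : I → ℂ) : ℝ :=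
  Real.sqrt (∑ᶠ γ, ‖ξ γ‖ ^ 2 * F.d γ ^ 2)


section Aux

private lemma sum_le_finsum'' {I : Type*} {g : I → ℝ} (hg : (Function.support g).Finite)
    (h0 : ∀ x, 0 ≤ g x) (s : Finset I) : ∑ x ∈ s, g x ≤ ∑ᶠ x, g x := by
  classical
  rw [finsum_eq_sum_of_support_subset g (s := s ∪ hg.toFinset)
    (by intro x hx; simp only [Finset.coe_union, Set.mem_union]
        exact Or.inr (by simpa using hg.mem_toFinset.2 hx))]
  exact Finset.sum_le_sum_of_subset_of_nonneg Finset.subset_union_left (fun i _ _ => h0 i)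

end Aux

/-- The `ℓ¹`-type bound
`‖f · ξ‖₂ ≤ (∑_α |f(α)| d(α)²) ‖ξ‖₂` for finitely supported `f, ξ : I → ℂ`. -/
theorem stmt_7 {I : Type*} (F : FusionData I) (f ξ : I → ℂ)
    (hf : (Function.support f).Finite) (hξ : (Function.support ξ).Finite) :
    norm2 F (fmul F f ξ) ≤ (∑ᶠ α, ‖f α‖ * F.d α ^ 2) * norm2 F ξ := by
  classical
  set S : Finset I := hf.toFinset with hS
  set T : Finset I := hξ.toFinset with hT
  set U : Finset I := (S ×ˢ T).biUnion (fun p => (F.N_fin p.1 p.2).toFinset) with hUdef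
  have hd : ∀ γ, (0:ℝ) < F.d γ := fun γ => lt_of_lt_of_le one_pos (F.one_le_d γ)
  -- d γ ≤ d α * d β when N α β γ ≠ 0
  have keyN : ∀ α β γ, F.N α β γ ≠ 0 → F.d γ ≤ F.d α * F.d β := by
    intro α β γ h
    have hfin : (Function.support fun γ' => ((F.N α β γ' : ℝ) * F.d γ')).Finite := by
      apply (F.N_fin α β).subset
      intro x hx
      simp only [Function.mem_support] at hx ⊢
      intro h0; exact hx (by simp [h0])
    have h1 : ∑ x ∈ ({γ} : Finset I), (F.N α β x : ℝ) * F.d x ≤ ∑ᶠ γ', (F.N α β γ' : ℝ) * F.d γ' :=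
      sum_le_finsum'' hfin (fun x => mul_nonneg (Nat.cast_nonneg _) (hd x).le) _
    simp only [Finset.sum_singleton] at h1
    have hN1 : (1:ℝ) ≤ (F.N α β γ : ℝ) := by exact_mod_cast Nat.one_le_iff_ne_zero.2 h
    calc F.d γ = 1 * F.d γ := (one_mul _).symm
      _ ≤ (F.N α β γ : ℝ) * F.d γ := by
          exact mul_le_mul_of_nonneg_right hN1 (hd γ).le
      _ ≤ ∑ᶠ γ', (F.N α β γ' : ℝ) * F.d γ' := h1
      _ = F.d α * F.d β := (F.d_mul α β).symm
  -- sum over β : ∑_{β ∈ T} N_{αβ}^γ d β ≤ d α d γ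
  have hβsum : ∀ α γ, ∑ β ∈ T, (F.N α β γ : ℝ) * F.d β ≤ F.d α * F.d γ := by
    intro α γ
    have hfin : (Function.support fun β => ((F.N α β γ : ℝ) * F.d β)).Finite := by
      apply (F.N_fin (F.bar α) γ).subset
      intro x hx
      simp only [Function.mem_support] at hx ⊢
      intro h0; apply hx
      rw [F.frob₁, h0]; simp
    calc ∑ β ∈ T, (F.N α β γ : ℝ) * F.d β ≤ ∑ᶠ β, (F.N α β γ : ℝ) * F.d β :=
          sum_le_finsum'' hfin (fun x => mul_nonneg (Nat.cast_nonneg _) (hd x).le) _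
      _ = ∑ᶠ β, (F.N (F.bar α) γ β : ℝ) * F.d β := by
          apply finsum_congr; intro β; rw [F.frob₁]
      _ = F.d (F.bar α) * F.d γ := (F.d_mul _ _).symm
      _ = F.d α * F.d γ := by rw [F.d_bar]
  -- sum over γ : ∑_{γ ∈ U} N_{αβ}^γ d γ ≤ d α d β
  have hγsum : ∀ α β, ∑ γ ∈ U, (F.N α β γ : ℝ) * F.d γ ≤ F.d α * F.d β := by
    intro α β
    have hfin : (Function.support fun γ => ((F.N α β γ : ℝ) * F.d γ)).Finite := by
      apply (F.N_fin α β).subset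
      intro x hx
      simp only [Function.mem_support] at hx ⊢
      intro h0; exact hx (by simp [h0])
    calc ∑ γ ∈ U, (F.N α β γ : ℝ) * F.d γ ≤ ∑ᶠ γ, (F.N α β γ : ℝ) * F.d γ :=
          sum_le_finsum'' hfin (fun x => mul_nonneg (Nat.cast_nonneg _) (hd x).le) _
      _ = F.d α * F.d β := (F.d_mul α β).symm
  -- partial product
  set g : I → I → ℂ := fun α γ => ∑ β ∈ T, ξ β * (F.N α β γ : ℂ) with hg
  have hA : ∀ γ, fmul F f ξ γ = ∑ α ∈ S, ∑ β ∈ T, f α * ξ β * (F.N α β γ : ℂ) := by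
    intro γ
    rw [fmul]
    rw [finsum_eq_sum_of_support_subset _ (s := S) ?hout]
    case hout =>
      intro α hα
      simp only [Function.mem_support] at hα
      by_contra hc
      have : f α = 0 := by simpa [hS, hf.mem_toFinset] using hc
      exact hα (by simp [this])
    refine Finset.sum_congr rfl fun α _ => ?_
    refine finsum_eq_sum_of_support_subset _ ?_
    intro β hβ
    simp only [Function.mem_support] at hβ
    have : ξ β ≠ 0 := fun h => hβ (by simp [h])
    simpa [hT, hξ.mem_toFinset] using this
  -- support of fmul
  have hfsupp : ∀ γ, γ ∉ U → fmul F f ξ γ = 0 := by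
    intro γ hγ
    rw [hA γ]
    refine Finset.sum_eq_zero fun α hα => Finset.sum_eq_zero fun β hβ => ?_
    have hz : F.N α β γ = 0 := by
      by_contra h
      exact hγ (Finset.mem_biUnion.2 ⟨(α, β), Finset.mem_product.2 ⟨hα, hβ⟩,
        (F.N_fin α β).mem_toFinset.2 h⟩)
    simp [hz]
  -- norm2 over finite sets
  have hn2 : ∀ (h : I → ℂ) (s : Finset I), (∀ γ, γ ∉ s → h γ = 0) →
      norm2 F h = Real.sqrt (∑ γ ∈ s, ‖h γ‖ ^ 2 * F.d γ ^ 2) := by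
    intro h s hs
    rw [norm2]
    congr 1
    refine finsum_eq_sum_of_support_subset _ ?_
    intro γ hγ
    simp only [Function.mem_support] at hγ
    by_contra hc
    exact hγ (by simp [hs γ hc])
  -- Key estimate: ∑_{γ ∈ U} ‖g α γ‖² d γ² ≤ d α⁴ ∑_{β ∈ T} ‖ξ β‖² d β²
  have key : ∀ α, ∑ γ ∈ U, ‖g α γ‖ ^ 2 * F.d γ ^ 2 ≤
      (F.d α ^ 2) ^ 2 * ∑ β ∈ T, ‖ξ β‖ ^ 2 * F.d β ^ 2 := by
    intro α
    -- Cauchy-Schwarz pointwise in γ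
    have hCS : ∀ γ, ‖g α γ‖ ^ 2 ≤
        (F.d α * F.d γ) * ∑ β ∈ T, ((F.N α β γ : ℝ) / F.d β) * ‖ξ β‖ ^ 2 := by
      intro γ
      have h1 : ‖g α γ‖ ≤ ∑ β ∈ T, ‖ξ β‖ * (F.N α β γ : ℝ) := by
        refine (norm_sum_le _ _).trans_eq ?_
        refine Finset.sum_congr rfl fun β _ => ?_
        rw [norm_mul]
        norm_num
      have h1' : ‖g α γ‖ ^ 2 ≤ (∑ β ∈ T, ‖ξ β‖ * (F.N α β γ : ℝ)) ^ 2 :=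
        pow_le_pow_left₀ (norm_nonneg _) h1 2
      have h2 := Finset.sum_mul_sq_le_sq_mul_sq T
        (fun β => Real.sqrt ((F.N α β γ : ℝ) * F.d β))
        (fun β => Real.sqrt ((F.N α β γ : ℝ) / F.d β) * ‖ξ β‖)
      have e1 : ∀ β ∈ T, Real.sqrt ((F.N α β γ : ℝ) * F.d β) *
          (Real.sqrt ((F.N α β γ : ℝ) / F.d β) * ‖ξ β‖) = ‖ξ β‖ * (F.N α β γ : ℝ) := by
        intro β _
        have hdβ : F.d β ≠ 0 := (hd β).ne'
        rw [← mul_assoc, ← Real.sqrt_mul (mul_nonneg (Nat.cast_nonneg _) (hd β).le)]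
        have : (F.N α β γ : ℝ) * F.d β * ((F.N α β γ : ℝ) / F.d β) = (F.N α β γ : ℝ) ^ 2 := by
          field_simp
        rw [this, Real.sqrt_sq (by positivity)]
        ring
      have e2 : ∀ β ∈ T, Real.sqrt ((F.N α β γ : ℝ) * F.d β) ^ 2 = (F.N α β γ : ℝ) * F.d β := by
        intro β _; exact Real.sq_sqrt (mul_nonneg (Nat.cast_nonneg _) (hd β).le)
      have e3 : ∀ β ∈ T, (Real.sqrt ((F.N α β γ : ℝ) / F.d β) * ‖ξ β‖) ^ 2 =
          ((F.N α β γ : ℝ) / F.d β) * ‖ξ β‖ ^ 2 := by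
        intro β _
        rw [mul_pow, Real.sq_sqrt (div_nonneg (Nat.cast_nonneg _) (hd β).le)]
      rw [Finset.sum_congr rfl e1, Finset.sum_congr rfl e2, Finset.sum_congr rfl e3] at h2
      refine h1'.trans (h2.trans ?_)
      refine mul_le_mul_of_nonneg_right (hβsum α γ) ?_
      exact Finset.sum_nonneg fun β _ =>
        mul_nonneg (div_nonneg (Nat.cast_nonneg _) (hd β).le) (sq_nonneg _)
    calc ∑ γ ∈ U, ‖g α γ‖ ^ 2 * F.d γ ^ 2
        ≤ ∑ γ ∈ U, ∑ β ∈ T,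
            (F.d α * (‖ξ β‖ ^ 2 / F.d β)) * ((F.N α β γ : ℝ) * F.d γ ^ 3) := by
          refine Finset.sum_le_sum fun γ _ => ?_
          have h3 := mul_le_mul_of_nonneg_right (hCS γ) (sq_nonneg (F.d γ))
          refine h3.trans_eq ?_
          rw [Finset.mul_sum, Finset.sum_mul]
          refine Finset.sum_congr rfl fun β _ => ?_
          ring
      _ = ∑ β ∈ T, ∑ γ ∈ U,
            (F.d α * (‖ξ β‖ ^ 2 / F.d β)) * ((F.N α β γ : ℝ) * F.d γ ^ 3) := Finset.sum_comm
      _ ≤ ∑ β ∈ T, (F.d α * (‖ξ β‖ ^ 2 / F.d β)) * ((F.d α * F.d β) ^ 2 * (F.d α * F.d β)) := by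
          refine Finset.sum_le_sum fun β _ => ?_
          rw [← Finset.mul_sum]
          refine mul_le_mul_of_nonneg_left ?_
            (mul_nonneg (hd α).le (div_nonneg (sq_nonneg _) (hd β).le))
          calc ∑ γ ∈ U, (F.N α β γ : ℝ) * F.d γ ^ 3
              ≤ ∑ γ ∈ U, ((F.N α β γ : ℝ) * F.d γ) * (F.d α * F.d β) ^ 2 := by
                refine Finset.sum_le_sum fun γ _ => ?_
                rcases Nat.eq_zero_or_pos (F.N α β γ) with h0 | h0
                · simp [h0]
                · have hle := keyN α β γ h0.ne'
                  have hdγ := hd γ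
                  have hN : (0:ℝ) ≤ (F.N α β γ : ℝ) := Nat.cast_nonneg _
                  have h2 : F.d γ ^ 2 ≤ (F.d α * F.d β) ^ 2 := by nlinarith
                  nlinarith [mul_le_mul_of_nonneg_left h2 (mul_nonneg hN hdγ.le)]
            _ = (∑ γ ∈ U, (F.N α β γ : ℝ) * F.d γ) * (F.d α * F.d β) ^ 2 :=
                (Finset.sum_mul _ _ _).symm
            _ ≤ (F.d α * F.d β) * (F.d α * F.d β) ^ 2 :=
                mul_le_mul_of_nonneg_right (hγsum α β) (sq_nonneg _)
            _ = (F.d α * F.d β) ^ 2 * (F.d α * F.d β) := by ring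
      _ = (F.d α ^ 2) ^ 2 * ∑ β ∈ T, ‖ξ β‖ ^ 2 * F.d β ^ 2 := by
          rw [Finset.mul_sum]
          refine Finset.sum_congr rfl fun β _ => ?_
          have : F.d β ≠ 0 := (hd β).ne'
          field_simp
  -- vectors in Euclidean space
  set v : I → EuclideanSpace ℂ U := fun α => WithLp.toLp 2 (fun γ : U => g α γ * (F.d γ : ℂ)) with hv
  have hterm : ∀ (z : ℂ) (γ : I), ‖z * (F.d γ : ℂ)‖ ^ 2 = ‖z‖ ^ 2 * F.d γ ^ 2 := by
    intro z γ
    rw [norm_mul, mul_pow, Complex.norm_real, Real.norm_eq_abs, sq_abs]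
  have hvnorm : ∀ α, ‖v α‖ = Real.sqrt (∑ γ ∈ U, ‖g α γ‖ ^ 2 * F.d γ ^ 2) := by
    intro α
    rw [EuclideanSpace.norm_eq]
    congr 1
    rw [← Finset.sum_coe_sort U (fun γ => ‖g α γ‖ ^ 2 * F.d γ ^ 2)]
    exact Finset.sum_congr rfl fun γ _ => hterm (g α γ) γ
  have hξ0 : ∀ β, β ∉ T → ξ β = 0 := by
    intro β hβ
    by_contra h
    exact hβ (by simpa [hT, hξ.mem_toFinset] using h)
  have hvle : ∀ α, ‖v α‖ ≤ F.d α ^ 2 * norm2 F ξ := by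
    intro α
    rw [hvnorm α, hn2 ξ T hξ0]
    calc Real.sqrt (∑ γ ∈ U, ‖g α γ‖ ^ 2 * F.d γ ^ 2)
        ≤ Real.sqrt ((F.d α ^ 2) ^ 2 * ∑ β ∈ T, ‖ξ β‖ ^ 2 * F.d β ^ 2) :=
          Real.sqrt_le_sqrt (key α)
      _ = F.d α ^ 2 * Real.sqrt (∑ β ∈ T, ‖ξ β‖ ^ 2 * F.d β ^ 2) := by
          rw [Real.sqrt_mul (sq_nonneg _), Real.sqrt_sq (sq_nonneg _)]
  -- fmul as a linear combination of the v α
  have hsum_v : ∀ γ : U, (∑ α ∈ S, f α • v α) γ = fmul F f ξ γ * (F.d γ : ℂ) := by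
    intro γ
    have h1 : (∑ α ∈ S, f α • v α) γ = ∑ α ∈ S, f α * (g α γ * (F.d γ : ℂ)) := by
      rw [WithLp.ofLp_sum, Finset.sum_apply]
      rfl
    rw [h1, hA γ, Finset.sum_mul]
    refine Finset.sum_congr rfl fun α _ => ?_
    simp only [hg, Finset.sum_mul, Finset.mul_sum]
    exact Finset.sum_congr rfl fun β _ => by ring
  have hnorm_w : norm2 F (fmul F f ξ) = ‖∑ α ∈ S, f α • v α‖ := by
    rw [hn2 (fmul F f ξ) U hfsupp, EuclideanSpace.norm_eq]
    congr 1
    rw [← Finset.sum_coe_sort U (fun γ => ‖fmul F f ξ γ‖ ^ 2 * F.d γ ^ 2)]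
    refine Finset.sum_congr rfl fun γ _ => ?_
    rw [hsum_v γ, hterm]
  -- final assembly
  have hfin : (∑ᶠ α, ‖f α‖ * F.d α ^ 2) = ∑ α ∈ S, ‖f α‖ * F.d α ^ 2 := by
    refine finsum_eq_sum_of_support_subset _ ?_
    intro α hα
    simp only [Function.mem_support] at hα
    have : f α ≠ 0 := by
      intro h; exact hα (by simp [h])
    simpa [hS, hf.mem_toFinset] using this
  rw [hfin, hnorm_w]
  calc ‖∑ α ∈ S, f α • v α‖ ≤ ∑ α ∈ S, ‖f α • v α‖ := norm_sum_le _ _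
    _ = ∑ α ∈ S, ‖f α‖ * ‖v α‖ := by
        refine Finset.sum_congr rfl fun α _ => ?_
        rw [norm_smul]
    _ ≤ ∑ α ∈ S, ‖f α‖ * (F.d α ^ 2 * norm2 F ξ) :=
        Finset.sum_le_sum fun α _ => mul_le_mul_of_nonneg_left (hvle α) (norm_nonneg _)
    _ = (∑ α ∈ S, ‖f α‖ * F.d α ^ 2) * norm2 F ξ := by
        rw [Finset.sum_mul]
        refine Finset.sum_congr rfl fun α _ => ?_
        ring
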